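/- Let (W,S) be a Coxeter system, π ∈ W, and Q = σ_n ⋯ σ_1 a word in the generators (positions indexed from the right) such that some subsequence of Q is a reduced word for π. Define words w_0, w_1, …, w_n by: w_0 is the empty word, and w_k = σ_k w_{k-1} if some reduced word for π has σ_k w_{k-1} as a suffix, and w_k = w_{k-1} otherwise. Then w_n is a reduced word for π. -/

import Mathlib

/-!
STATEMENT 11: Let (W,S) be a Coxeter system, π ∈ W, and Q = σ_n ⋯ σ_1 a word in the
generators (positions indexed from the right) such that some subsequence of Q is a reduced
word for π. Define words w_0, w_1, …, w_n by: w_0 is the empty word, and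
w_k = σ_k w_{k-1} if some reduced word for π has σ_k w_{k-1} as a suffix, and
w_k = w_{k-1} otherwise. Then w_n is a reduced word for π.

Convention: the word `Q = σ_n ⋯ σ_1` is the Lean list `[σ_n, σ_{n-1}, …, σ_1]`; the
recursion producing `w_n` from `Q` peels off the head `σ_n` and first computes
`w_{n-1}` from the tail.
-/

open scoped Classical

variable {B W : Type*} [Group W] {M : CoxeterMatrix B}

/-- The rightmost subword construction: `rightmostWord cs π [σ_n, …, σ_1] = w_n` where
`w_0 = []` and `w_k = σ_k :: w_{k-1}` if some reduced word for `π` has `σ_k w_{k-1}` as a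
suffix, and `w_k = w_{k-1}` otherwise. -/
noncomputable def rightmostWord (cs : CoxeterSystem M W) (π : W) : List B → List B
  | [] => []
  | σ :: rest =>
      let w := rightmostWord cs π rest
      if ∃ u : List B, cs.IsReduced u ∧ cs.wordProd u = π ∧ (σ :: w).IsSuffix u
      then σ :: w else w

open List

namespace MyExchange

noncomputable def refl0 (cs : CoxeterSystem M W) (i : B) : Equiv.Perm (W × ZMod 2) :=
  Function.Involutive.toPerm
    (fun x => (cs.simple i * x.1 * cs.simple i, x.2 + if x.1 = cs.simple i then 1 else 0))
    (by
      intro ⟨t, ε⟩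
      have hii := cs.simple_mul_simple_self i
      have h : cs.simple i * (cs.simple i * t * cs.simple i) * cs.simple i = t := by
        have e : cs.simple i * (cs.simple i * t * cs.simple i) * cs.simple i
            = (cs.simple i * cs.simple i) * t * (cs.simple i * cs.simple i) := by group
        rw [e, hii, one_mul, mul_one]
      have h2 : (cs.simple i * t * cs.simple i = cs.simple i) ↔ (t = cs.simple i) := by
        constructor
        · intro he
          have : cs.simple i * (cs.simple i * t * cs.simple i) * cs.simple i
              = cs.simple i * cs.simple i * cs.simple i := by rw [he]
          rw [h, hii, one_mul] at this
          exact this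
        · rintro rfl
          rw [hii, one_mul]
      simp only [h, h2]
      refine Prod.ext rfl ?_
      show ε + (if t = cs.simple i then 1 else 0) + (if t = cs.simple i then 1 else 0) = ε
      rw [add_assoc, CharTwo.add_self_eq_zero, add_zero])

lemma refl0_apply (cs : CoxeterSystem M W) (i : B) (t : W) (ε : ZMod 2) :
    refl0 cs i (t, ε) = (cs.simple i * t * cs.simple i, ε + if t = cs.simple i then 1 else 0) :=
  rfl

lemma pow_refl0_apply (cs : CoxeterSystem M W) (i i' : B) (k : ℕ) (t : W) (ε : ZMod 2) :
    ((refl0 cs i * refl0 cs i') ^ k) (t, ε) =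
      ((cs.simple i * cs.simple i') ^ k * t * ((cs.simple i * cs.simple i') ^ k)⁻¹,
       ε + ∑ r ∈ Finset.range (2 * k),
         if t * cs.simple i = ((cs.simple i * cs.simple i') ^ (r + 1))⁻¹ then 1 else 0) := by
  set si := cs.simple i with hsi
  set si' := cs.simple i' with hsi'
  have hii : si * si = 1 := cs.simple_mul_simple_self i
  have hii' : si' * si' = 1 := cs.simple_mul_simple_self i'
  set p := si * si' with hp
  have hpinv : p⁻¹ = si' * si := by
    rw [hp, mul_inv_rev, cs.inv_simple, cs.inv_simple]
  have hps : p⁻¹ * si = si' := by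
    rw [hpinv, mul_assoc, hii, mul_one]
  have hsp1 : si * p = p⁻¹ * si := by
    rw [hps, hp, ← mul_assoc, hii, one_mul]
  have hsp : ∀ n : ℕ, si * p ^ n = (p ^ n)⁻¹ * si := by
    intro n
    induction n with
    | zero => simp
    | succ m ih =>
        rw [pow_succ, ← mul_assoc, ih, mul_assoc, hsp1, ← mul_assoc, ← mul_inv_rev]
        congr 2
        rw [← pow_succ', pow_succ]
  have hsp' : ∀ n : ℕ, si * (p ^ n)⁻¹ = p ^ n * si := by
    intro n
    have h := hsp n
    calc si * (p ^ n)⁻¹ = p ^ n * ((p ^ n)⁻¹ * si) * (p ^ n)⁻¹ := by group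
      _ = p ^ n * (si * p ^ n) * (p ^ n)⁻¹ := by rw [h]
      _ = p ^ n * si := by group
  induction k with
  | zero => simp
  | succ n ih =>
      rw [pow_succ', Equiv.Perm.mul_apply, ih, Equiv.Perm.mul_apply, refl0_apply, refl0_apply]
      have h2 : 2 * (n + 1) = (2 * n + 1) + 1 := by ring
      rw [h2, Finset.sum_range_succ, Finset.sum_range_succ]
      have e1 : (p ^ n * t * (p ^ n)⁻¹ = si') ↔ (t * si = (p ^ (2 * n + 1))⁻¹) := by
        have hc : (p ^ n)⁻¹ * si' * p ^ n = (p ^ (2*n+1))⁻¹ * si := by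
          rw [← hps]
          calc (p ^ n)⁻¹ * (p⁻¹ * si) * p ^ n
              = (p ^ n)⁻¹ * p⁻¹ * (si * p ^ n) := by group
            _ = (p ^ n)⁻¹ * p⁻¹ * ((p ^ n)⁻¹ * si) := by rw [hsp]
            _ = ((p ^ n * p * p ^ n))⁻¹ * si := by group
            _ = (p ^ (2*n+1))⁻¹ * si := by
                congr 2
                rw [← pow_succ, ← pow_add]
                congr 1
                omega
        constructor
        · intro h
          have ht : t = (p ^ n)⁻¹ * si' * p ^ n := by
            rw [← h]; group
          rw [ht, hc, mul_assoc, hii, mul_one]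
        · intro h
          have ht : t = (p ^ (2*n+1))⁻¹ * si := by
            calc t = t * si * si := by rw [mul_assoc, hii, mul_one]
              _ = (p ^ (2*n+1))⁻¹ * si := by rw [h]
          rw [ht, ← hc]
          group
      have e2 : (si' * (p ^ n * t * (p ^ n)⁻¹) * si' = si) ↔
          (t * si = (p ^ (2 * n + 2))⁻¹) := by
        have hmid : si' * si * si' = p⁻¹ * p⁻¹ * si := by
          rw [← hps]
          calc (p⁻¹ * si) * si * (p⁻¹ * si)
              = p⁻¹ * (si * si) * p⁻¹ * si := by group
            _ = p⁻¹ * p⁻¹ * si := by rw [hii, mul_one]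
        have hc : (p ^ n)⁻¹ * (si' * si * si') * p ^ n = (p ^ (2*n+2))⁻¹ * si := by
          rw [hmid]
          calc (p ^ n)⁻¹ * (p⁻¹ * p⁻¹ * si) * p ^ n
              = (p ^ n)⁻¹ * p⁻¹ * p⁻¹ * (si * p ^ n) := by group
            _ = (p ^ n)⁻¹ * p⁻¹ * p⁻¹ * ((p ^ n)⁻¹ * si) := by rw [hsp]
            _ = (p ^ n * p * p * p ^ n)⁻¹ * si := by group
            _ = (p ^ (2*n+2))⁻¹ * si := by
                congr 2
                rw [← pow_succ, ← pow_succ, ← pow_add]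
                congr 1
                omega
        have conj_iff : (si' * (p ^ n * t * (p ^ n)⁻¹) * si' = si) ↔
            (p ^ n * t * (p ^ n)⁻¹ = si' * si * si') := by
          constructor
          · intro h
            calc p ^ n * t * (p ^ n)⁻¹
                = si' * (si' * (p ^ n * t * (p ^ n)⁻¹) * si') * si' := by
                  calc p ^ n * t * (p ^ n)⁻¹
                      = (si' * si') * (p ^ n * t * (p ^ n)⁻¹) * (si' * si') := by
                        rw [hii', one_mul, mul_one]
                    _ = si' * (si' * (p ^ n * t * (p ^ n)⁻¹) * si') * si' := by group
              _ = si' * si * si' := by rw [h]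
          · intro h
            rw [h]
            calc si' * (si' * si * si') * si'
                = (si' * si') * si * (si' * si') := by group
              _ = si := by rw [hii', one_mul, mul_one]
        rw [conj_iff]
        constructor
        · intro h
          have ht : t = (p ^ n)⁻¹ * (si' * si * si') * p ^ n := by
            rw [← h]; group
          rw [ht, hc, mul_assoc, hii, mul_one]
        · intro h
          have ht : t = (p ^ (2*n+2))⁻¹ * si := by
            calc t = t * si * si := by rw [mul_assoc, hii, mul_one]
              _ = (p ^ (2*n+2))⁻¹ * si := by rw [h]
          rw [ht, ← hc]
          group
      refine Prod.ext ?_ ?_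
      · show si * (si' * (p ^ n * t * (p ^ n)⁻¹) * si') * si
            = p ^ (n + 1) * t * (p ^ (n + 1))⁻¹
        have hfix1 : p ^ (n + 1) = si * si' * p ^ n := by rw [pow_succ', hp]
        have hfix2 : (p ^ (n + 1))⁻¹ = (p ^ n)⁻¹ * (si' * si) := by
          rw [pow_succ', mul_inv_rev, hpinv]
        rw [hfix2, hfix1]
        simp only [mul_assoc]
      · show ε + _ + (if p ^ n * t * (p ^ n)⁻¹ = si' then 1 else 0)
             + (if si' * (p ^ n * t * (p ^ n)⁻¹) * si' = si then 1 else 0) = ε + _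
        rw [e1, e2]
        ring

lemma refl0_liftable (cs : CoxeterSystem M W) :
    M.IsLiftable (fun i => refl0 cs i) := by
  intro i i'
  have hm := cs.simple_mul_simple_pow i i'
  refine Equiv.ext fun x => ?_
  obtain ⟨t, ε⟩ := x
  rw [pow_refl0_apply, Equiv.Perm.one_apply]
  refine Prod.ext ?_ ?_
  · show (cs.simple i * cs.simple i') ^ M i i' * t
        * ((cs.simple i * cs.simple i') ^ M i i')⁻¹ = t
    rw [hm, one_mul, inv_one, mul_one]
  · show ε + _ = ε
    have h0 : 2 * M i i' = M i i' + M i i' := by ring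
    rw [h0, Finset.sum_range_add]
    have heq : ∀ r ∈ Finset.range (M i i'),
        (if t * cs.simple i = ((cs.simple i * cs.simple i') ^ (M i i' + r + 1))⁻¹
          then (1 : ZMod 2) else 0)
        = (if t * cs.simple i = ((cs.simple i * cs.simple i') ^ (r + 1))⁻¹
          then (1 : ZMod 2) else 0) := by
      intro r _
      congr 2
      rw [add_assoc, pow_add, hm, one_mul]
    rw [Finset.sum_congr rfl heq, CharTwo.add_self_eq_zero, add_zero]

/-- The parity homomorphism. -/
noncomputable def parityHom (cs : CoxeterSystem M W) : W →* Equiv.Perm (W × ZMod 2) :=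
  cs.lift ⟨fun i => refl0 cs i, refl0_liftable cs⟩

lemma parityHom_wordProd (cs : CoxeterSystem M W) (ω : List B) (t : W) (ε : ZMod 2) :
    parityHom cs (cs.wordProd ω) (t, ε) =
      (cs.wordProd ω * t * (cs.wordProd ω)⁻¹,
       ε + ((cs.rightInvSeq ω).count t : ZMod 2)) := by
  induction ω generalizing ε with
  | nil => simp [CoxeterSystem.rightInvSeq]
  | cons i ω ih =>
      rw [cs.wordProd_cons, map_mul]
      have hlift : parityHom cs (cs.simple i) = refl0 cs i :=
        cs.lift_apply_simple (refl0_liftable cs) i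
      rw [Equiv.Perm.mul_apply, ih, hlift, refl0_apply]
      have hris : cs.rightInvSeq (i :: ω)
          = ((cs.wordProd ω)⁻¹ * cs.simple i * cs.wordProd ω) :: cs.rightInvSeq ω := rfl
      refine Prod.ext ?_ ?_
      · show cs.simple i * (cs.wordProd ω * t * (cs.wordProd ω)⁻¹) * cs.simple i
            = cs.simple i * cs.wordProd ω * t * (cs.simple i * cs.wordProd ω)⁻¹
        rw [mul_inv_rev, cs.inv_simple]
        simp only [mul_assoc]
      · show ε + ((cs.rightInvSeq ω).count t : ZMod 2)
            + (if cs.wordProd ω * t * (cs.wordProd ω)⁻¹ = cs.simple i then 1 else 0)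
            = ε + (((cs.rightInvSeq (i :: ω)).count t : ℕ) : ZMod 2)
        rw [hris, List.count_cons]
        have hiff : ((cs.wordProd ω)⁻¹ * cs.simple i * cs.wordProd ω = t)
            ↔ (cs.wordProd ω * t * (cs.wordProd ω)⁻¹ = cs.simple i) := by
          constructor
          · intro h; rw [← h]; group
          · intro h; rw [← h]; group
        by_cases hcase : cs.wordProd ω * t * (cs.wordProd ω)⁻¹ = cs.simple i
        · have h0 := hiff.mpr hcase
          simp [beq_iff_eq, h0, hcase]
          push_cast
          ring
        · have h0 : ¬((cs.wordProd ω)⁻¹ * cs.simple i * cs.wordProd ω = t) :=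
            fun hh => hcase (hiff.mp hh)
          simp [beq_iff_eq, h0, hcase]

/-- Parity of the number of occurrences of `t` in the right inversion sequence depends
only on the group element represented by the word. -/
lemma count_ris_parity (cs : CoxeterSystem M W) {ω ω' : List B}
    (h : cs.wordProd ω = cs.wordProd ω') (t : W) :
    (((cs.rightInvSeq ω).count t : ℕ) : ZMod 2)
      = (((cs.rightInvSeq ω').count t : ℕ) : ZMod 2) := by
  have h1 := parityHom_wordProd cs ω t 0
  have h2 := parityHom_wordProd cs ω' t 0
  rw [h] at h1
  rw [h1] at h2
  have := congrArg Prod.snd h2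
  simpa using this

lemma mem_ris_of_descent (cs : CoxeterSystem M W) {ω : List B} (hω : cs.IsReduced ω) {i : B}
    (h : cs.length (cs.wordProd ω * cs.simple i) < cs.length (cs.wordProd ω)) :
    cs.simple i ∈ cs.rightInvSeq ω := by
  obtain ⟨τ, hτlen, hτ⟩ := cs.exists_reduced_word (cs.wordProd ω * cs.simple i)
  have hwp : cs.wordProd (τ ++ [i]) = cs.wordProd ω := by
    rw [cs.wordProd_append, cs.wordProd_singleton, ← hτ, mul_assoc,
      cs.simple_mul_simple_self, mul_one]
  have hlen : cs.length (cs.wordProd ω * cs.simple i) + 1 = cs.length (cs.wordProd ω) := by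
    rcases cs.length_mul_simple (cs.wordProd ω) i with hh | hh
    · omega
    · exact hh
  have hred : cs.IsReduced (τ ++ [i]) := by
    unfold CoxeterSystem.IsReduced
    rw [hwp, List.length_append, List.length_singleton, ← hτlen, ← hτ]
    omega
  have hmem : cs.simple i ∈ cs.rightInvSeq (τ ++ [i]) := by
    rw [← List.concat_eq_append, cs.rightInvSeq_concat]
    simp
  have hcount : ((cs.rightInvSeq (τ ++ [i])).count (cs.simple i)) = 1 :=
    List.count_eq_one_of_mem hred.nodup_rightInvSeq hmem
  have hpar := count_ris_parity cs hwp (cs.simple i)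
  rw [hcount] at hpar
  by_contra hnot
  rw [List.count_eq_zero_of_not_mem hnot] at hpar
  simp at hpar

/-- The exchange property, in the form needed below. -/
lemma exchange (cs : CoxeterSystem M W) {v : List B} (hv : cs.IsReduced v) {i : B}
    (h : cs.length (cs.wordProd v * cs.simple i) < cs.length (cs.wordProd v)) :
    ∃ v' : List B, v' <+ v ∧ cs.IsReduced (v' ++ [i]) ∧
      cs.wordProd (v' ++ [i]) = cs.wordProd v := by
  have hmem := mem_ris_of_descent cs hv h
  obtain ⟨j, hj, hget⟩ := List.getElem_of_mem hmem
  have hjv : j < v.length := by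
    have := cs.length_rightInvSeq v
    omega
  have hgetD : (cs.rightInvSeq v).getD j 1 = cs.simple i := by
    rw [List.getD_eq_getElem _ _ hj, hget]
  have hkey := cs.wordProd_mul_getD_rightInvSeq v j
  rw [hgetD] at hkey
  have hprod : cs.wordProd (v.eraseIdx j ++ [i]) = cs.wordProd v := by
    rw [cs.wordProd_append, cs.wordProd_singleton, ← hkey, mul_assoc,
      cs.simple_mul_simple_self, mul_one]
  refine ⟨v.eraseIdx j, List.eraseIdx_sublist v j, ?_, hprod⟩
  have e1 : (v.eraseIdx j).length + 1 = v.length := List.length_eraseIdx_add_one hjv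
  have e2 : cs.length (cs.wordProd (v.eraseIdx j)) ≤ (v.eraseIdx j).length :=
    cs.length_wordProd_le _
  unfold CoxeterSystem.IsReduced
  rw [hprod, List.length_append, List.length_singleton]
  have hle : cs.length (cs.wordProd v) ≤ (v.eraseIdx j).length + 1 := by
    calc cs.length (cs.wordProd v) = cs.length (cs.wordProd (v.eraseIdx j) * cs.simple i) := by
          rw [← hkey, mul_assoc, cs.simple_mul_simple_self, mul_one]
      _ ≤ cs.length (cs.wordProd (v.eraseIdx j)) + cs.length (cs.simple i) :=
          cs.length_mul_le _ _
      _ ≤ (v.eraseIdx j).length + 1 := by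
          have := cs.length_simple i
          omega
  have hge : (v.eraseIdx j).length + 1 ≤ cs.length (cs.wordProd v) := by
    rw [e1, hv]
  omega

end MyExchange

open MyExchange

lemma rightmostWord_cons (cs : CoxeterSystem M W) (πg : W) (σ : B) (rest : List B) :
    rightmostWord cs πg (σ :: rest) =
      if ∃ u : List B, cs.IsReduced u ∧ cs.wordProd u = πg ∧
          (σ :: rightmostWord cs πg rest).IsSuffix u
      then σ :: rightmostWord cs πg rest else rightmostWord cs πg rest := rfl

lemma rightmost_invariant (cs : CoxeterSystem M W) (πg : W) :
    ∀ (Q L : List B),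
      (∃ u : List B, cs.IsReduced u ∧ cs.wordProd u = πg ∧ u.Sublist (L ++ Q)) →
      ∃ u : List B, cs.IsReduced u ∧ cs.wordProd u = πg ∧
        u.Sublist (L ++ rightmostWord cs πg Q) ∧ (rightmostWord cs πg Q).IsSuffix u := by
  intro Q
  induction Q with
  | nil =>
      intro L h
      obtain ⟨u, h1, h2, h3⟩ := h
      exact ⟨u, h1, h2, h3, List.nil_suffix⟩
  | cons σ rest ih =>
      intro L h
      set w' := rightmostWord cs πg rest with hw'
      have h' : ∃ u : List B, cs.IsReduced u ∧ cs.wordProd u = πg ∧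
          u.Sublist ((L ++ [σ]) ++ rest) := by
        obtain ⟨u, h1, h2, h3⟩ := h
        refine ⟨u, h1, h2, ?_⟩
        rw [List.append_cons] at h3
        exact h3
      obtain ⟨u, hured, huprod, husub, husuf⟩ := ih (L ++ [σ]) h'
      obtain ⟨v, hv⟩ := husuf
      have hvsub : v <+ L ++ [σ] := by
        rw [← hv] at husub
        obtain ⟨l₁, l₂, heq, hl₁, hl₂⟩ := List.sublist_append_iff.mp husub
        have hlen : v.length ≤ l₁.length := by
          have e : v.length + w'.length = l₁.length + l₂.length := by
            have := congrArg List.length heq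
            simpa using this
          have := hl₂.length_le
          omega
        have hpv : v <+: l₁ :=
          List.prefix_of_prefix_length_le (heq ▸ List.prefix_append v w')
            (List.prefix_append l₁ l₂) hlen
        exact hpv.sublist.trans hl₁
      obtain ⟨v₁, v₂, hveq, hv₁, hv₂⟩ := List.sublist_append_iff.mp hvsub
      by_cases hcond : ∃ u₀ : List B, cs.IsReduced u₀ ∧ cs.wordProd u₀ = πg ∧
          (σ :: w').IsSuffix u₀
      · rw [rightmostWord_cons, ← hw', if_pos hcond]
        rcases List.sublist_singleton.mp hv₂ with h2 | h2
        · -- v₂ = [] : exchange argument needed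
          have hvL : v <+ L := by
            rw [hveq, h2, List.append_nil]
            exact hv₁
          obtain ⟨u₀, h₀red, h₀prod, h₀suf⟩ := hcond
          obtain ⟨v₀, hv₀⟩ := h₀suf
          -- v is reduced (prefix of the reduced word u)
          have hvred : cs.IsReduced v := by
            have := hured.take v.length
            rwa [← hv, List.take_left] at this
          have hulen : v.length + w'.length = cs.length πg := by
            have hh := hured
            unfold CoxeterSystem.IsReduced at hh
            rw [huprod, ← hv] at hh
            rw [List.length_append] at hh
            omega
          have hu₀len : v₀.length + (1 + w'.length) = cs.length πg := by
            have hh := h₀red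
            unfold CoxeterSystem.IsReduced at hh
            rw [h₀prod, ← hv₀] at hh
            rw [List.length_append, List.length_cons] at hh
            omega
          have hkey : cs.wordProd v * cs.simple σ = cs.wordProd v₀ := by
            have e1 : cs.wordProd v * cs.wordProd w' = πg := by
              rw [← cs.wordProd_append, hv, huprod]
            have e2 : cs.wordProd v₀ * (cs.simple σ * cs.wordProd w') = πg := by
              rw [← cs.wordProd_cons, ← cs.wordProd_append, hv₀, h₀prod]
            have e3 : cs.wordProd v * cs.simple σ * (cs.simple σ * cs.wordProd w')
                = cs.wordProd v₀ * (cs.simple σ * cs.wordProd w') := by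
              rw [e2]
              calc cs.wordProd v * cs.simple σ * (cs.simple σ * cs.wordProd w')
                  = cs.wordProd v * (cs.simple σ * cs.simple σ) * cs.wordProd w' := by
                    simp only [mul_assoc]
                _ = cs.wordProd v * cs.wordProd w' := by
                    rw [cs.simple_mul_simple_self, mul_one]
                _ = πg := e1
            exact mul_right_cancel e3
          have hdesc : cs.length (cs.wordProd v * cs.simple σ)
              < cs.length (cs.wordProd v) := by
            rw [hkey]
            have hle : cs.length (cs.wordProd v₀) ≤ v₀.length := cs.length_wordProd_le v₀
            have hvv : cs.length (cs.wordProd v) = v.length := hvred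
            omega
          obtain ⟨v', hv'sub, hv'red, hv'prod⟩ := exchange cs hvred hdesc
          have hprodstar : cs.wordProd (v' ++ (σ :: w')) = πg := by
            rw [← List.singleton_append, ← List.append_assoc, cs.wordProd_append,
              hv'prod, ← cs.wordProd_append, hv, huprod]
          refine ⟨v' ++ (σ :: w'), ?_, hprodstar, ?_, ?_⟩
          · unfold CoxeterSystem.IsReduced
            rw [hprodstar]
            have e2 : (v' ++ [σ]).length = v.length := by
              have h1 : cs.length (cs.wordProd (v' ++ [σ])) = (v' ++ [σ]).length := hv'red
              rw [hv'prod] at h1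
              have h2 : cs.length (cs.wordProd v) = v.length := hvred
              omega
            rw [List.length_append, List.length_singleton] at e2
            rw [List.length_append, List.length_cons]
            omega
          · exact (hv'sub.trans hvL).append (List.Sublist.refl _)
          · exact ⟨v', rfl⟩
        · -- v₂ = [σ] : u itself works
          have hu' : v₁ ++ (σ :: w') = u := by
            rw [← hv, hveq, h2, List.append_assoc, List.singleton_append]
          refine ⟨u, hured, huprod, ?_, ⟨v₁, hu'⟩⟩
          rw [← hu']
          exact hv₁.append (List.Sublist.refl _)
      · rw [rightmostWord_cons, ← hw', if_neg hcond]
        rcases List.sublist_singleton.mp hv₂ with h2 | h2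
        · have hvL : v <+ L := by
            rw [hveq, h2, List.append_nil]
            exact hv₁
          exact ⟨u, hured, huprod, by rw [← hv]; exact hvL.append (List.Sublist.refl _),
            ⟨v, hv⟩⟩
        · exfalso
          apply hcond
          have hu' : v₁ ++ (σ :: w') = u := by
            rw [← hv, hveq, h2, List.append_assoc, List.singleton_append]
          exact ⟨u, hured, huprod, ⟨v₁, hu'⟩⟩

theorem rightmostWord_isReducedWord (cs : CoxeterSystem M W) (π : W) (Q : List B)
    (hQ : ∃ u : List B, cs.IsReduced u ∧ cs.wordProd u = π ∧ u.Sublist Q) :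
    cs.IsReduced (rightmostWord cs π Q) ∧ cs.wordProd (rightmostWord cs π Q) = π := by
  obtain ⟨u, h1, h2, h3, h4⟩ := rightmost_invariant cs π Q [] (by simpa using hQ)
  rw [List.nil_append] at h3
  have : rightmostWord cs π Q = u :=
    h4.eq_of_length (le_antisymm h4.length_le h3.length_le)
  rw [this]
  exact ⟨h1, h2⟩
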